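/- Let q and q' be odd integers. Then the closures of the subgroups generated by q and by q' in ℤ_2^× coincide if and only if q ≡ q' (mod 8) and v_2(q² − 1) = v_2(q'² − 1), where v_2 denotes the 2-adic valuation. -/

import Mathlib

private lemma oddA (m : ℕ) (t : ℤ) (ht : Odd t) (j : ℕ) :
    ∃ t' : ℤ, Odd t' ∧ (1 + 2^(m+2) * t)^(2^j) = 1 + 2^(m+2+j) * t' := by
  induction j with
  | zero => exact ⟨t, ht, by ring⟩
  | succ j ih =>
    obtain ⟨t', ht', h⟩ := ih
    have he : Even ((2:ℤ)^(m+1+j) * t'^2) := ⟨2^(m+j) * t'^2, by rw [pow_succ']; ring⟩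
    refine ⟨t' + 2^(m+1+j) * t'^2, ht'.add_even he, ?_⟩
    have h2 : (2:ℕ)^(j+1) = 2^j * 2 := by ring
    rw [h2, pow_mul, h]
    ring_nf

private lemma approxInt (m : ℕ) (t : ℤ) (ht : Odd t) (a : ℤ) (ha : a = 1 + 2^(m+2)*t)
    (x : ℤ) (hx : (2:ℤ)^(m+2) ∣ x - 1) (n : ℕ) :
    ∃ c : ℕ, (2:ℤ)^n ∣ a^c - x := by
  have hoa : Odd a := ha ▸ (odd_one.add_even ⟨2^(m+1)*t, by rw [pow_succ']; ring⟩)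
  induction n with
  | zero => exact ⟨0, by simp⟩
  | succ n ih =>
    by_cases hn : n + 1 ≤ m + 2
    · refine ⟨0, dvd_trans (pow_dvd_pow 2 hn) ?_⟩
      have := dvd_neg.mpr hx
      simpa using this
    · push_neg at hn
      obtain ⟨c, hc⟩ := ih
      obtain ⟨d, hd⟩ := hc
      rcases Int.even_or_odd d with he | ho
      · obtain ⟨e, hee⟩ := he
        exact ⟨c, ⟨e, by rw [hd, hee]; ring⟩⟩
      · obtain ⟨t', ht', hp⟩ := oddA m t ht (n - (m+2))
        have hre : m + 2 + (n - (m+2)) = n := by omega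
        rw [hre] at hp
        refine ⟨c + 2^(n - (m+2)), ?_⟩
        have key : a^(c + 2^(n-(m+2))) - x = (a^c - x) + 2^n * (a^c * t') := by
          rw [pow_add, ha, hp]; ring
        obtain ⟨e, hee⟩ := ho.add_odd ((hoa.pow (n := c)).mul ht')
        refine ⟨e, ?_⟩
        rw [key, hd, pow_succ]
        rw [show (2:ℤ)^n * d + 2^n * (a^c*t') = 2^n * (d + a^c * t') from by ring, hee]
        ring

private lemma val_eq' (j : ℕ) (a : ℤ) (ha : Odd a) : padicValInt 2 (2^j * a) = j := by
  have ha0 : a ≠ 0 := by rintro rfl; simp [Int.not_odd_iff_even] at ha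
  have hz : (2:ℤ)^j * a ≠ 0 := mul_ne_zero (pow_ne_zero _ two_ne_zero) ha0
  have hcast : ((2:ℕ):ℤ) = 2 := by norm_num
  have h1 : j ≤ padicValInt 2 (2^j*a) := by
    have := (padicValInt_dvd_iff (p := 2) j (2^j*a)).mp (by rw [hcast]; exact Dvd.intro a rfl)
    exact this.resolve_left hz
  have h2 : ¬ (2:ℤ)^(j+1) ∣ 2^j * a := by
    rintro ⟨b, hb⟩
    rw [pow_succ, mul_assoc] at hb
    have hab : a = 2 * b := by
      have hp : (2:ℤ)^j ≠ 0 := pow_ne_zero _ two_ne_zero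
      exact mul_left_cancel₀ hp hb
    rw [hab] at ha
    exact (Int.not_odd_iff_even.mpr ⟨b, by ring⟩) ha
  by_contra hne
  exact h2 (by rw [← hcast]; exact (padicValInt_dvd_iff (p := 2) (j+1) (2^j*a)).mpr (Or.inr (by omega)))

private lemma val_decomp (z : ℤ) (hz : z ≠ 0) :
    ∃ t : ℤ, Odd t ∧ z = 2^(padicValInt 2 z) * t := by
  have hcast : ((2:ℕ):ℤ) = 2 := by norm_num
  obtain ⟨t, ht⟩ := (hcast ▸ padicValInt_dvd (p := 2) z : (2:ℤ)^(padicValInt 2 z) ∣ z)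
  refine ⟨t, ?_, ht⟩
  set k := padicValInt 2 z with hk
  rcases Int.even_or_odd t with ⟨s, hs⟩ | hodd
  · exfalso
    have : (2:ℤ)^(k + 1) ∣ z := ⟨s, by rw [ht, hs]; ring⟩
    have := (padicValInt_dvd_iff (p := 2) (padicValInt 2 z + 1) z).mp (by rwa [hcast])
    omega
  · exact hodd

/-- if 4 ∣ q - ε with ε = ±1 and q² ≠ 1 then v₂(q²-1) = v₂(q-ε)+1 and v₂(q-ε) ≥ 2 -/
private lemma val_split (q ε : ℤ) (hε : ε = 1 ∨ ε = -1) (h4 : 4 ∣ q - ε) (hq2 : q^2 ≠ 1) :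
    padicValInt 2 (q^2-1) = padicValInt 2 (q-ε) + 1 ∧ 2 ≤ padicValInt 2 (q-ε) ∧
    ∃ a : ℤ, Odd a ∧ q - ε = 2^(padicValInt 2 (q-ε)) * a := by
  have hne : q - ε ≠ 0 := by
    rintro h
    apply hq2
    have : q = ε := by omega
    rcases hε with rfl | rfl <;> simp [this]
  obtain ⟨a, ha, hqa⟩ := val_decomp (q-ε) hne
  set j := padicValInt 2 (q-ε) with hj
  have hj2 : 2 ≤ j := by
    have hcast : ((2:ℕ):ℤ) = 2 := by norm_num
    have : (2:ℤ)^2 ∣ q - ε := by norm_num; exact h4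
    have := (padicValInt_dvd_iff (p := 2) 2 (q-ε)).mp (by rwa [hcast])
    omega
  obtain ⟨m, hm⟩ : ∃ m, j = m + 2 := ⟨j - 2, by omega⟩
  -- q + ε = 2 * (2^(j-1) * a + ε), odd cofactor
  have hqe : q + ε = 2 * (2^(m+1) * a + ε) := by
    rw [show q + ε = (q - ε) + 2*ε by ring, hqa, hm]; ring
  have hodd2 : Odd (2^(m+1) * a + ε) := by
    have : Even ((2:ℤ)^(m+1) * a) := ⟨2^m * a, by rw [pow_succ']; ring⟩
    rcases hε with rfl | rfl
    · exact this.add_one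
    · have h := this.sub_odd odd_one; rwa [sub_eq_add_neg] at h
  have key : q^2 - 1 = 2^(j+1) * (a * (2^(m+1)*a + ε)) := by
    have hε2 : ε^2 = 1 := by rcases hε with rfl | rfl <;> ring
    have : q^2 - 1 = (q - ε) * (q + ε) := by rw [show (q-ε)*(q+ε) = q^2 - ε^2 by ring, hε2]
    rw [this, hqa, hqe, pow_succ]; ring
  refine ⟨?_, hj2, a, ha, hqa⟩
  rw [key, val_eq' (j+1) _ (ha.mul hodd2)]
open Topology

private lemma dvd_iff_norm (n : ℕ) (x : ℤ_[2]) : (2:ℤ_[2])^n ∣ x ↔ ‖x‖ ≤ (2:ℝ)^(-(n:ℤ)) := by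
  have h := PadicInt.norm_le_pow_iff_mem_span_pow x n
  rw [Ideal.mem_span_singleton] at h
  simpa using h.symm

private lemma int_dvd_iff (n : ℕ) (a : ℤ) : (2:ℤ_[2])^n ∣ (a : ℤ_[2]) ↔ (2^n:ℤ) ∣ a := by
  have := PadicInt.pow_p_dvd_int_iff (p := 2) n a
  norm_num at this ⊢; exact this

private def Sgrp (k : ℕ) (u : ℤ_[2]ˣ) (h : (2:ℤ_[2])^k ∣ (u:ℤ_[2])^2 - 1) : Subgroup ℤ_[2]ˣ where
  carrier := {x | (2:ℤ_[2])^k ∣ (x:ℤ_[2]) - 1 ∨ (2:ℤ_[2])^k ∣ (x:ℤ_[2]) - (u:ℤ_[2])}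
  one_mem' := Or.inl (by simp)
  mul_mem' := by
    rintro x y (hx | hx) (hy | hy)
    · left
      have h1 := dvd_add (hy.mul_left (x:ℤ_[2])) hx
      convert h1 using 1; push_cast; ring
    · right
      have h1 := dvd_add (hy.mul_left (x:ℤ_[2])) (hx.mul_left (u:ℤ_[2]))
      convert h1 using 1; push_cast; ring
    · right
      have h1 := dvd_add (hx.mul_left (y:ℤ_[2])) (hy.mul_left (u:ℤ_[2]))
      convert h1 using 1; push_cast; ring
    · left
      have h1 := dvd_add (dvd_add (hx.mul_left (y:ℤ_[2])) (hy.mul_left (u:ℤ_[2]))) h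
      convert h1 using 1; push_cast; ring
  inv_mem' := by
    rintro x (hx | hx)
    · left
      have hxx : ((x⁻¹:ℤ_[2]ˣ):ℤ_[2]) * (x:ℤ_[2]) = 1 := by
        rw [← Units.val_mul]; simp
      have h1 := (dvd_neg.mpr hx).mul_left ((x⁻¹:ℤ_[2]ˣ):ℤ_[2])
      convert h1 using 1
      linear_combination hxx
    · right
      have hxx : ((x⁻¹:ℤ_[2]ˣ):ℤ_[2]) * (x:ℤ_[2]) = 1 := by
        rw [← Units.val_mul]; simp
      have h1 := (dvd_add (hx.mul_left (u:ℤ_[2])) h).mul_left (-((x⁻¹:ℤ_[2]ˣ):ℤ_[2]))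
      convert h1 using 1
      linear_combination ((u:ℤ_[2])) * hxx

private lemma appr_dvd' (x : ℤ_[2]) (n : ℕ) : (2:ℤ_[2])^n ∣ x - ((x.appr n : ℤ) : ℤ_[2]) := by
  have := PadicInt.appr_spec n x
  rw [Ideal.mem_span_singleton] at this
  push_cast
  norm_num at this ⊢
  exact this

private lemma odd_exists_eps (q : ℤ) (hq : Odd q) : ∃ ε : ℤ, (ε = 1 ∨ ε = -1) ∧ (4:ℤ) ∣ q - ε := by
  obtain ⟨b, rfl⟩ := hq
  rcases Int.even_or_odd b with ⟨s, hs⟩ | ⟨s, hs⟩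
  · exact ⟨1, Or.inl rfl, ⟨s, by omega⟩⟩
  · exact ⟨-1, Or.inr rfl, ⟨s+1, by omega⟩⟩

private lemma mem_clo (q : ℤ) (hq : Odd q) (h1 : q^2 ≠ 1) (u : ℤ_[2]ˣ) (hu : (u:ℤ_[2]) = q)
    (x : ℤ_[2]ˣ) :
    x ∈ (Subgroup.zpowers u).topologicalClosure ↔
      ((2:ℤ_[2])^(padicValInt 2 (q^2-1)) ∣ (x:ℤ_[2]) - 1 ∨
       (2:ℤ_[2])^(padicValInt 2 (q^2-1)) ∣ (x:ℤ_[2]) - (u:ℤ_[2])) := by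
  set k := padicValInt 2 (q^2-1) with hkdef
  have hq2 : q^2 - 1 ≠ 0 := sub_ne_zero.mpr h1
  obtain ⟨t, ht, hqt⟩ := val_decomp _ hq2
  obtain ⟨ε, hε, h4⟩ := odd_exists_eps q hq
  obtain ⟨hsplit, hj2, -⟩ := val_split q ε hε h4 h1
  have hk3 : 3 ≤ k := by omega
  have hdvd : (2:ℤ_[2])^k ∣ (u:ℤ_[2])^2 - 1 := by
    rw [hu, show ((q:ℤ_[2])^2 - 1) = ((q^2 - 1 : ℤ) : ℤ_[2]) by push_cast; ring, int_dvd_iff]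
    exact ⟨t, hqt⟩
  have hmem_iff : ∀ y : ℤ_[2]ˣ, y ∈ (Subgroup.zpowers u).topologicalClosure ↔
      (y:ℤ_[2]) ∈ closure (Units.val '' ((Subgroup.zpowers u):Set ℤ_[2]ˣ)) := by
    intro y
    rw [show (y ∈ (Subgroup.zpowers u).topologicalClosure ↔
        y ∈ closure ((Subgroup.zpowers u):Set ℤ_[2]ˣ)) from Iff.rfl]
    rw [Units.isOpenEmbedding_val.toIsEmbedding.closure_eq_preimage_closure_image]
    rfl
  constructor
  · intro hx
    have hclosed : IsClosed ((Sgrp k u hdvd : Set ℤ_[2]ˣ)) := by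
      have hset : (Sgrp k u hdvd : Set _) = Units.val ⁻¹'
          (Metric.closedBall 1 ((2:ℝ)^(-(k:ℤ))) ∪ Metric.closedBall ((u:ℤ_[2])) ((2:ℝ)^(-(k:ℤ)))) := by
        ext y
        simp only [Sgrp, Subgroup.coe_set_mk, SetLike.mem_coe, Subgroup.mem_mk, Submonoid.mem_mk, Subsemigroup.mem_mk, Set.mem_setOf_eq, Set.mem_preimage, Set.mem_union,
          Metric.mem_closedBall, dist_eq_norm]
        rw [dvd_iff_norm, dvd_iff_norm]
      rw [hset]
      exact (Metric.isClosed_closedBall.union Metric.isClosed_closedBall).preimage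
        Units.isOpenEmbedding_val.toIsEmbedding.continuous
    have := Subgroup.topologicalClosure_minimal _
      (Subgroup.zpowers_le.mpr (Or.inr (by simp) : u ∈ Sgrp k u hdvd)) hclosed hx
    exact this
  · intro hx
    -- key approximation
    have key : ∀ (y : ℤ_[2]), (2:ℤ_[2])^k ∣ y - 1 → ∀ n:ℕ, ∃ c:ℕ,
        (2:ℤ_[2])^n ∣ y - ((u:ℤ_[2]))^(2*c) := by
      intro y hy n
      set N := max n k with hN
      set X : ℤ := (y.appr N : ℤ) with hX
      have h1' : (2:ℤ_[2])^N ∣ y - (X:ℤ_[2]) := appr_dvd' y N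
      have hXd : (2:ℤ)^k ∣ X - 1 := by
        rw [← int_dvd_iff]
        have ha : (2:ℤ_[2])^k ∣ (X:ℤ_[2]) - y := by
          rw [show (X:ℤ_[2]) - y = -(y - (X:ℤ_[2])) by ring]
          exact dvd_neg.mpr ((pow_dvd_pow 2 (le_max_right n k)).trans h1')
        have hdv : (2:ℤ_[2])^k ∣ ((X:ℤ_[2]) - y) + (y - 1) := dvd_add ha hy
        convert hdv using 1
        push_cast
        ring
      obtain ⟨m, hm⟩ : ∃ m, k = m + 2 := ⟨k - 2, by omega⟩
      rw [← hkdef] at hqt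
      obtain ⟨c, hc⟩ := approxInt m t ht (q^2) (by rw [← hm]; linarith [hqt]) X (hm ▸ hXd) N
      refine ⟨c, (pow_dvd_pow 2 (le_max_left n k)).trans ?_⟩
      have h2' : (2:ℤ_[2])^N ∣ (X:ℤ_[2]) - ((u:ℤ_[2]))^(2*c) := by
        have := (int_dvd_iff N ((q^2)^c - X)).mpr hc
        have heq2 : (X:ℤ_[2]) - ((u:ℤ_[2]))^(2*c) = -((((q^2)^c - X : ℤ)) : ℤ_[2]) := by
          rw [hu]; push_cast; ring
        rw [heq2]
        exact dvd_neg.mpr this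
      have := dvd_add h1' h2'
      convert this using 1; ring
    rw [hmem_iff]
    rw [Metric.mem_closure_iff]
    intro δ hδ
    obtain ⟨n, hn⟩ := exists_pow_lt_of_lt_one hδ (by norm_num : (1/2:ℝ) < 1)
    have hpow : (2:ℝ)^(-(n:ℤ)) < δ := by
      rw [zpow_neg, zpow_natCast]
      calc ((2:ℝ)^n)⁻¹ = (1/2)^n := by rw [one_div, inv_pow]
      _ < δ := hn
    rcases hx with h | h
    · obtain ⟨c, hc⟩ := key (x:ℤ_[2]) h n
      refine ⟨((u^(2*c) : ℤ_[2]ˣ) : ℤ_[2]), ⟨u^(2*c), Subgroup.npow_mem_zpowers u (2*c), rfl⟩, ?_⟩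
      rw [dist_eq_norm]
      calc ‖(x:ℤ_[2]) - ((u^(2*c):ℤ_[2]ˣ):ℤ_[2])‖ ≤ (2:ℝ)^(-(n:ℤ)) := by
            rw [← dvd_iff_norm]; rw [Units.val_pow_eq_pow_val]; exact hc
        _ < δ := hpow
    · have hy : (2:ℤ_[2])^k ∣ ((x:ℤ_[2]) * ((u⁻¹:ℤ_[2]ˣ):ℤ_[2])) - 1 := by
        have huu : ((u⁻¹:ℤ_[2]ˣ):ℤ_[2]) * (u:ℤ_[2]) = 1 := by rw [← Units.val_mul]; simp
        have := h.mul_left ((u⁻¹:ℤ_[2]ˣ):ℤ_[2])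
        convert this using 1
        linear_combination huu
      obtain ⟨c, hc⟩ := key _ hy n
      refine ⟨((u^(2*c+1) : ℤ_[2]ˣ) : ℤ_[2]), ⟨u^(2*c+1), Subgroup.npow_mem_zpowers u (2*c+1), rfl⟩, ?_⟩
      rw [dist_eq_norm]
      have hfin : (2:ℤ_[2])^n ∣ (x:ℤ_[2]) - ((u^(2*c+1):ℤ_[2]ˣ):ℤ_[2]) := by
        have huu : ((u⁻¹:ℤ_[2]ˣ):ℤ_[2]) * (u:ℤ_[2]) = 1 := by rw [← Units.val_mul]; simp
        have h2 := hc.mul_left ((u:ℤ_[2]))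
        convert h2 using 1
        rw [Units.val_pow_eq_pow_val]
        linear_combination (-((x:ℤ_[2]))) * huu
      calc ‖(x:ℤ_[2]) - ((u^(2*c+1):ℤ_[2]ˣ):ℤ_[2])‖ ≤ (2:ℝ)^(-(n:ℤ)) := by
            rw [← dvd_iff_norm]; exact hfin
        _ < δ := hpow

private lemma clo_small (q : ℤ) (h1 : q^2 = 1) (u : ℤ_[2]ˣ) (hu : (u:ℤ_[2]) = q)
    (x : ℤ_[2]ˣ) (hx : x ∈ (Subgroup.zpowers u).topologicalClosure) : x = 1 ∨ x = u := by
  have hu2 : u^2 = 1 := by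
    ext
    rw [Units.val_pow_eq_pow_val, hu, Units.val_one]
    have h2 := congrArg (fun z : ℤ => (z : ℤ_[2])) h1
    push_cast at h2
    exact h2
  have hset : ((Subgroup.zpowers u) : Set ℤ_[2]ˣ) = {1, u} := by
    ext y
    constructor
    · rintro ⟨n, rfl⟩
      rcases Int.even_or_odd n with ⟨s, hs⟩ | ⟨s, hs⟩
      · left
        simp only
        have h2 : u ^ (2:ℤ) = 1 := by norm_cast
        rw [hs, show s + s = 2*s by ring, zpow_mul, h2, one_zpow]
      · right
        simp only
        have h2 : u ^ (2:ℤ) = 1 := by norm_cast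
        rw [hs, zpow_add, zpow_mul, h2, one_zpow, zpow_one, one_mul]
        exact rfl
    · rintro (rfl | rfl)
      · exact ⟨0, by simp⟩
      · exact ⟨1, by simp⟩
  haveI hT1 : T1Space ℤ_[2]ˣ := Units.isOpenEmbedding_val.toIsEmbedding.t1Space
  have hclosed : IsClosed ((Subgroup.zpowers u) : Set ℤ_[2]ˣ) := by
    rw [hset]
    exact (Set.toFinite ({1, u} : Set ℤ_[2]ˣ)).isClosed
  have := Subgroup.topologicalClosure_minimal _ (le_refl (Subgroup.zpowers u)) hclosed hx
  rw [← Subgroup.mem_carrier] at this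
  have : x ∈ ({1, u} : Set ℤ_[2]ˣ) := hset ▸ this
  simpa using this
private lemma hpm (a : ℤ) (ha : a^2 = 1) : a = 1 ∨ a = -1 := by
  have h : (a-1)*(a+1) = 0 := by linear_combination ha
  rcases mul_eq_zero.mp h with h | h
  · left; omega
  · right; omega

private lemma val_cast_eq (a b : ℤ) (w w' : ℤ_[2]ˣ) (hw : (w:ℤ_[2]) = a) (hw' : (w':ℤ_[2]) = b)
    (h : w = w') : a = b := by
  have : ((a:ℤ_[2])) = b := by rw [← hw, ← hw', h]
  exact_mod_cast this

/-- For odd integers `q, q'`, the closed subgroups of `ℤ_2ˣ` generated by `q` and `q'`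
coincide if and only if `q ≡ q' (mod 8)` and `v_2(q² - 1) = v_2(q'² - 1)`. -/
theorem stmt13 (q q' : ℤ) (hq : Odd q) (hq' : Odd q')
    (u u' : ℤ_[2]ˣ) (hu : (u : ℤ_[2]) = (q : ℤ_[2])) (hu' : (u' : ℤ_[2]) = (q' : ℤ_[2])) :
    (Subgroup.zpowers u).topologicalClosure = (Subgroup.zpowers u').topologicalClosure ↔
      (q ≡ q' [ZMOD 8] ∧ padicValInt 2 (q ^ 2 - 1) = padicValInt 2 (q' ^ 2 - 1)) := by
  by_cases h1 : q^2 = 1 <;> by_cases h1' : q'^2 = 1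
  · -- both ±1
    constructor
    · intro heq
      have hx : u' = 1 ∨ u' = u := clo_small q h1 u hu u'
        (by rw [heq]; exact Subgroup.le_topologicalClosure _ (Subgroup.mem_zpowers u'))
      have hx' : u = 1 ∨ u = u' := clo_small q' h1' u' hu' u
        (by rw [← heq]; exact Subgroup.le_topologicalClosure _ (Subgroup.mem_zpowers u))
      have hqq : q = q' := by
        rcases hx with h | h
        · rcases hx' with h' | h'
          · rw [val_cast_eq q 1 u 1 hu (by simp) h', val_cast_eq q' 1 u' 1 hu' (by simp) h]
          · exact val_cast_eq q q' u u' hu hu' h'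
        · exact (val_cast_eq q' q u' u hu' hu h).symm
      subst hqq
      exact ⟨Int.ModEq.refl _, rfl⟩
    · rintro ⟨h8, -⟩
      have hqq : q = q' := by
        rcases hpm q h1 with rfl | rfl <;> rcases hpm q' h1' with rfl | rfl <;> revert h8 <;> decide
      subst hqq
      rw [Units.ext (show (u:ℤ_[2]) = (u':ℤ_[2]) by rw [hu, hu'])]
  · -- q = ±1, q' not
    constructor
    · intro heq
      exfalso
      have hx : u' = 1 ∨ u' = u := clo_small q h1 u hu u'
        (by rw [heq]; exact Subgroup.le_topologicalClosure _ (Subgroup.mem_zpowers u'))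
      rcases hx with h | h
      · exact h1' (by rw [val_cast_eq q' 1 u' 1 hu' (by simp) h]; ring)
      · exact h1' (by rw [val_cast_eq q' q u' u hu' hu h]; exact h1)
    · rintro ⟨-, hv⟩
      exfalso
      have hzero : padicValInt 2 (q^2-1) = 0 := by rw [h1]; simp
      obtain ⟨ε, hε, h4⟩ := odd_exists_eps q' hq'
      obtain ⟨hsplit, hj2, -⟩ := val_split q' ε hε h4 h1'
      omega
  · -- q' = ±1, q not
    constructor
    · intro heq
      exfalso
      have hx : u = 1 ∨ u = u' := clo_small q' h1' u' hu' u
        (by rw [← heq]; exact Subgroup.le_topologicalClosure _ (Subgroup.mem_zpowers u))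
      rcases hx with h | h
      · exact h1 (by rw [val_cast_eq q 1 u 1 hu (by simp) h]; ring)
      · exact h1 (by rw [val_cast_eq q q' u u' hu hu' h]; exact h1')
    · rintro ⟨-, hv⟩
      exfalso
      have hzero : padicValInt 2 (q'^2-1) = 0 := by rw [h1']; simp
      obtain ⟨ε, hε, h4⟩ := odd_exists_eps q hq
      obtain ⟨hsplit, hj2, -⟩ := val_split q ε hε h4 h1
      omega
  · -- main case
    have hq2 : q^2 - 1 ≠ 0 := sub_ne_zero.mpr h1
    have hq2' : q'^2 - 1 ≠ 0 := sub_ne_zero.mpr h1'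
    set k := padicValInt 2 (q^2-1) with hkdef
    set k' := padicValInt 2 (q'^2-1) with hkdef'
    obtain ⟨ε, hε, h4⟩ := odd_exists_eps q hq
    obtain ⟨hsplit, hj2, a, ha, hqa⟩ := val_split q ε hε h4 h1
    obtain ⟨ε', hε', h4'⟩ := odd_exists_eps q' hq'
    obtain ⟨hsplit', hj2', a', ha', hqa'⟩ := val_split q' ε' hε' h4' h1'
    have hk3 : 3 ≤ k := by omega
    have hk3' : 3 ≤ k' := by omega
    have hdq : (2:ℤ)^k ∣ q^2-1 := by
      have := padicValInt_dvd (p := 2) (q^2-1); norm_num at this; exact this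
    have hdq' : (2:ℤ)^k' ∣ q'^2-1 := by
      have := padicValInt_dvd (p := 2) (q'^2-1); norm_num at this; exact this
    constructor
    · intro heq
      have hPu' := (mem_clo q hq h1 u hu u').mp
        (by rw [heq]; exact Subgroup.le_topologicalClosure _ (Subgroup.mem_zpowers u'))
      have hP'u := (mem_clo q' hq' h1' u' hu' u).mp
        (by rw [← heq]; exact Subgroup.le_topologicalClosure _ (Subgroup.mem_zpowers u))
      -- k' ≤ k
      have hdvdk' : (2:ℤ)^k' ∣ q^2 - 1 := by
        rcases hP'u with h | h
        · have h2 : (2:ℤ_[2])^k' ∣ ((q^2-1 : ℤ) : ℤ_[2]) := by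
            have := h.mul_right ((u:ℤ_[2]) + 1)
            convert this using 1; push_cast [hu]; ring
          exact (int_dvd_iff _ _).mp h2
        · have h2 : (2:ℤ_[2])^k' ∣ ((q^2-1 : ℤ) : ℤ_[2]) := by
            have := dvd_add (h.mul_right ((u:ℤ_[2]) + (u':ℤ_[2]))) ((int_dvd_iff k' _).mpr hdq')
            convert this using 1; push_cast [hu, hu']; ring
          exact (int_dvd_iff _ _).mp h2
      have hdvdk : (2:ℤ)^k ∣ q'^2 - 1 := by
        rcases hPu' with h | h
        · have h2 : (2:ℤ_[2])^k ∣ ((q'^2-1 : ℤ) : ℤ_[2]) := by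
            have := h.mul_right ((u':ℤ_[2]) + 1)
            convert this using 1; push_cast [hu']; ring
          exact (int_dvd_iff _ _).mp h2
        · have h2 : (2:ℤ_[2])^k ∣ ((q'^2-1 : ℤ) : ℤ_[2]) := by
            have := dvd_add (h.mul_right ((u':ℤ_[2]) + (u:ℤ_[2]))) ((int_dvd_iff k _).mpr hdq)
            convert this using 1; push_cast [hu, hu']; ring
          exact (int_dvd_iff _ _).mp h2
      have hle1 : k' ≤ k := by
        have := (padicValInt_dvd_iff (p := 2) k' (q^2-1)).mp (by norm_num; exact hdvdk')
        rcases this with h | h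
        · exact absurd h hq2
        · omega
      have hle2 : k ≤ k' := by
        have := (padicValInt_dvd_iff (p := 2) k (q'^2-1)).mp (by norm_num; exact hdvdk)
        rcases this with h | h
        · exact absurd h hq2'
        · omega
      have hkk : k = k' := le_antisymm hle2 hle1
      refine ⟨?_, hkk⟩
      rcases hPu' with h | h
      · exfalso
        have hz : (2:ℤ)^k ∣ q' - 1 := by
          rw [← int_dvd_iff]
          convert h using 1
          push_cast [hu']; ring
        rcases hε' with rfl | rfl
        · -- v2(q'-1) = k'-1 = k-1 exactly, contradiction
          rw [hqa'] at hz
          rw [show k = padicValInt 2 (q'-1) + 1 from by omega, pow_succ'] at hz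
          obtain ⟨b, hb⟩ := hz
          have hcancel : a' = 2 * b := by
            have hp : (2:ℤ)^(padicValInt 2 (q'-1)) ≠ 0 := pow_ne_zero _ two_ne_zero
            apply mul_left_cancel₀ hp
            rw [hb]; ring
          rw [hcancel] at ha'
          exact (Int.not_odd_iff_even.mpr ⟨b, by ring⟩) ha'
        · have h8' : (8:ℤ) ∣ q' - 1 := dvd_trans ⟨2^(k-3), by rw [show (8:ℤ) = 2^3 by norm_num, ← pow_add]; congr 1; omega⟩ hz
          omega
      · have hz : (2:ℤ)^k ∣ q' - q := by
          rw [← int_dvd_iff]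
          convert h using 1
          push_cast [hu, hu']; ring
        have h8' : (8:ℤ) ∣ q' - q := dvd_trans ⟨2^(k-3), by rw [show (8:ℤ) = 2^3 by norm_num, ← pow_add]; congr 1; omega⟩ hz
        exact Int.modEq_iff_dvd.mpr h8'
    · rintro ⟨h8, hv⟩
      have hd8 : (8:ℤ) ∣ q' - q := Int.modEq_iff_dvd.mp h8
      have hεε : ε = ε' := by rcases hε with rfl | rfl <;> rcases hε' with rfl | rfl <;> omega
      subst hεε
      have hqq : (2:ℤ)^k ∣ q - q' := by
        obtain ⟨s, hs⟩ := ha.sub_odd ha'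
        refine ⟨s, ?_⟩
        have hj' : padicValInt 2 (q'-ε) = padicValInt 2 (q-ε) := by omega
        rw [show q - q' = (q - ε) - (q' - ε) by ring, hqa, hqa', hj',
          show k = padicValInt 2 (q-ε) + 1 from by omega, pow_succ]
        linear_combination ((2:ℤ)^(padicValInt 2 (q-ε))) * hs
      have hcast : (2:ℤ_[2])^k ∣ (u:ℤ_[2]) - (u':ℤ_[2]) := by
        rw [hu, hu']
        have := (int_dvd_iff k (q - q')).mpr hqq
        convert this using 1; push_cast; ring
      ext x
      rw [mem_clo q hq h1 u hu x, mem_clo q' hq' h1' u' hu' x, ← hkdef, ← hkdef', ← hv]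
      constructor
      · rintro (h | h)
        · exact Or.inl h
        · right
          have := dvd_add h hcast
          convert this using 1; ring
      · rintro (h | h)
        · exact Or.inl h
        · right
          have := dvd_sub h hcast
          convert this using 1; ring
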